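/- Let 0 < a ≤ A, let D ⊂ R^N be bounded measurable, and let u : D × [a, A] → [0,∞) be measurable with ∫_a^A u(x,α)dα ≤ M for all x ∈ D. Suppose in addition there exist β, C > 0 and ε > 0 such that u(x,α) ≤ C ε^{−1} exp(−β(α − a)/ε^{2/3}) for all x ∈ D, α ∈ [a,A]. Then, setting v(x) = ∫_a^A α u(x,α) dα, one has sup_{x∈D} |v(x) − a ∫_a^A u(x,α)dα| ≤ √ε·M + (C/β) (A−a) ε^{−1/3} exp(−β δ(ε) ε^{−2/3}) for the choice δ(ε) = √ε, and consequently sup_{x∈D}|v(x) − a·û(x)| → 0 as ε → 0, where û(x) = ∫_a^A u(x,α)dα. -/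

import Mathlib

open Set Real MeasureTheory Filter Topology

lemma myIntExp {c : ℝ} (s : ℝ) (hc : 0 < c) :
    ∫ x in Ioi s, Real.exp (-c * x) = Real.exp (-c * s) / c := by
  have h := integral_Ioi_of_hasDerivAt_of_tendsto
      (f := fun x => -Real.exp (-c * x) / c) (f' := fun x => Real.exp (-c * x))
      (a := s) (m := 0) ?_ ?_ (exp_neg_integrableOn_Ioi s hc) ?_
  · rw [h]; ring
  · exact Continuous.continuousWithinAt (by continuity)
  · intro x _
    have h1 : HasDerivAt (fun x : ℝ => -c * x) (-c) x := by
      simpa using (hasDerivAt_id x).const_mul (-c)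
    have h2 := ((h1.exp).neg).div_const c
    have h3 : HasDerivAt (fun x => -Real.exp (-c * x) / c) (-(Real.exp (-c * x) * -c) / c) x := h2
    refine h3.congr_deriv ?_
    show -(Real.exp (-c * x) * -c) / c = Real.exp (-c * x)
    rw [mul_neg, neg_neg, mul_div_assoc, div_self hc.ne', mul_one]
  · have h3 : Tendsto (fun x : ℝ => Real.exp (-c * x)) atTop (𝓝 0) := by
      have h4 := Real.tendsto_exp_neg_atTop_nhds_zero.comp
        (tendsto_id.const_mul_atTop hc)
      exact h4.congr (fun x => by simp [Function.comp, neg_mul])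
    have := (h3.neg).div_const c
    simpa using this

/-- Lemma 5.4: exponential concentration in the trait variable implies the first moment
`v(x) = ∫ α u(x,α) dα` is uniformly close to `a·û(x)`, with the explicit bound obtained by
splitting the integral at `α = a + √ε`; consequently `sup_D |v - a û| → 0` as `ε → 0`. -/
theorem stmt_9 {N : ℕ} (D : Set (EuclideanSpace ℝ (Fin N)))
    (hDmeas : MeasurableSet D) (hDbdd : Bornology.IsBounded D)
    (a A : ℝ) (ha : 0 < a) (haA : a ≤ A)
    (M β C : ℝ) (hM : 0 < M) (hβ : 0 < β) (hC : 0 < C)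
    (u : ℝ → EuclideanSpace ℝ (Fin N) → ℝ → ℝ)
    (hu0 : ∀ ε > (0:ℝ), ∀ x ∈ D, ∀ α ∈ Icc a A, 0 ≤ u ε x α)
    (huint : ∀ ε > (0:ℝ), ∀ x ∈ D, IntegrableOn (u ε x) (Icc a A))
    (hmass : ∀ ε > (0:ℝ), ∀ x ∈ D, (∫ α in Icc a A, u ε x α) ≤ M)
    (hdecay : ∀ ε > (0:ℝ), ∀ x ∈ D, ∀ α ∈ Icc a A,
      u ε x α ≤ C * ε⁻¹ * exp (-β * (α - a) / ε ^ ((2:ℝ)/3))) :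
    (∀ ε > (0:ℝ), ∀ x ∈ D,
      |(∫ α in Icc a A, α * u ε x α) - a * ∫ α in Icc a A, u ε x α|
        ≤ Real.sqrt ε * M
          + (C / β) * (A - a) * ε ^ (-(1:ℝ)/3) * exp (-β * Real.sqrt ε * ε ^ (-(2:ℝ)/3))) ∧
    (∀ δ > (0:ℝ), ∃ ε₀ > (0:ℝ), ∀ ε ∈ Ioo (0:ℝ) ε₀, ∀ x ∈ D,
      |(∫ α in Icc a A, α * u ε x α) - a * ∫ α in Icc a A, u ε x α| < δ) := by
  have key : ∀ ε > (0:ℝ), ∀ x ∈ D,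
      |(∫ α in Icc a A, α * u ε x α) - a * ∫ α in Icc a A, u ε x α|
        ≤ Real.sqrt ε * M
          + (C / β) * (A - a) * ε ^ (-(1:ℝ)/3) * exp (-β * Real.sqrt ε * ε ^ (-(2:ℝ)/3)) := by
    intro ε hε x hx
    set f := u ε x with hfdef
    have hf0 : ∀ α ∈ Icc a A, 0 ≤ f α := hu0 ε hε x hx
    have hfi : IntegrableOn f (Icc a A) := huint ε hε x hx
    set c : ℝ := β / ε ^ ((2:ℝ)/3) with hc
    have hεp23 : (0:ℝ) < ε ^ ((2:ℝ)/3) := Real.rpow_pos_of_pos hε _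
    have hcpos : 0 < c := div_pos hβ hεp23
    set s : ℝ := a + Real.sqrt ε with hs
    have hsqε : 0 < Real.sqrt ε := Real.sqrt_pos.2 hε
    -- integrability
    have hid_meas : AEStronglyMeasurable (fun α : ℝ => α)
        ((volume : Measure ℝ).restrict (Icc a A)) := measurable_id.aestronglyMeasurable
    have hfi1 : IntegrableOn (fun α => α * f α) (Icc a A) := by
      refine Integrable.bdd_mul (c := max |a| |A|) hfi hid_meas ?_
      refine ae_restrict_of_forall_mem measurableSet_Icc (fun α hα => ?_)
      exact abs_le_max_abs_abs hα.1 hα.2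
    have hfi2 : IntegrableOn (fun α => (α - a) * f α) (Icc a A) := by
      refine Integrable.bdd_mul (c := max |a| |A| + |a|) hfi
        ((measurable_id.sub measurable_const).aestronglyMeasurable) ?_
      refine ae_restrict_of_forall_mem measurableSet_Icc (fun α hα => ?_)
      calc ‖α - a‖ ≤ |α| + |a| := abs_sub α a
        _ ≤ max |a| |A| + |a| :=
            add_le_add_left (abs_le_max_abs_abs hα.1 hα.2) _
    -- rewrite difference as single integral
    have heq : (∫ α in Icc a A, α * f α) - a * ∫ α in Icc a A, f α
        = ∫ α in Icc a A, (α - a) * f α := by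
      rw [← integral_const_mul, ← integral_sub hfi1 (hfi.const_mul a)]
      refine setIntegral_congr_fun measurableSet_Icc (fun α _ => by ring)
    have hnn : 0 ≤ ∫ α in Icc a A, (α - a) * f α :=
      setIntegral_nonneg measurableSet_Icc
        (fun α hα => mul_nonneg (by linarith [hα.1]) (hf0 α hα))
    rw [heq, abs_of_nonneg hnn]
    -- split the integral
    set s1 : Set ℝ := Icc a A ∩ Iic s with hs1
    set s2 : Set ℝ := Icc a A ∩ Ioi s with hs2
    have hunion : Icc a A = s1 ∪ s2 := by
      rw [hs1, hs2, ← inter_union_distrib_left, Iic_union_Ioi, inter_univ]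
    have hdisj : Disjoint s1 s2 :=
      (Iic_disjoint_Ioi le_rfl).mono inter_subset_right inter_subset_right
    have hm1 : MeasurableSet s1 := measurableSet_Icc.inter measurableSet_Iic
    have hm2 : MeasurableSet s2 := measurableSet_Icc.inter measurableSet_Ioi
    have hsplit : (∫ α in Icc a A, (α - a) * f α)
        = (∫ α in s1, (α - a) * f α) + ∫ α in s2, (α - a) * f α := by
      rw [hunion]
      exact setIntegral_union hdisj hm2 (hfi2.mono_set (hunion ▸ subset_union_left))
        (hfi2.mono_set (hunion ▸ subset_union_right))
    have hsub1 : s1 ⊆ Icc a A := inter_subset_left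
    have hsub2 : s2 ⊆ Icc a A := inter_subset_left
    -- first piece
    have hB1 : (∫ α in s1, (α - a) * f α) ≤ Real.sqrt ε * M := by
      have step1 : (∫ α in s1, (α - a) * f α) ≤ ∫ α in s1, Real.sqrt ε * f α := by
        refine setIntegral_mono_on (hfi2.mono_set hsub1)
          ((hfi.mono_set hsub1).const_mul _) hm1 (fun α hα => ?_)
        have h1 : α - a ≤ Real.sqrt ε := by
          have := hα.2
          simp only [mem_Iic] at this
          rw [hs] at this; linarith
        exact mul_le_mul_of_nonneg_right h1 (hf0 α (hsub1 hα))
      have step2 : (∫ α in s1, f α) ≤ ∫ α in Icc a A, f α := by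
        refine setIntegral_mono_set hfi ?_ (HasSubset.Subset.eventuallyLE hsub1)
        exact ae_restrict_of_forall_mem measurableSet_Icc hf0
      calc (∫ α in s1, (α - a) * f α) ≤ ∫ α in s1, Real.sqrt ε * f α := step1
        _ = Real.sqrt ε * ∫ α in s1, f α := integral_const_mul _ _
        _ ≤ Real.sqrt ε * ∫ α in Icc a A, f α :=
            mul_le_mul_of_nonneg_left step2 hsqε.le
        _ ≤ Real.sqrt ε * M := mul_le_mul_of_nonneg_left (hmass ε hε x hx) hsqε.le
    -- second piece
    set K : ℝ := (A - a) * (C * ε⁻¹ * Real.exp (c * a)) with hK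
    have hKnn : 0 ≤ K := by
      refine mul_nonneg (by linarith) ?_
      positivity
    have hB2 : (∫ α in s2, (α - a) * f α)
        ≤ (C / β) * (A - a) * ε ^ (-(1:ℝ)/3) * exp (-β * Real.sqrt ε * ε ^ (-(2:ℝ)/3)) := by
      have hintK : IntegrableOn (fun α => K * Real.exp (-c * α)) (Ioi s) :=
        (exp_neg_integrableOn_Ioi s hcpos).const_mul K
      have step1 : (∫ α in s2, (α - a) * f α) ≤ ∫ α in s2, K * Real.exp (-c * α) := by
        refine setIntegral_mono_on (hfi2.mono_set hsub2)
          (hintK.mono_set inter_subset_right) hm2 (fun α hα => ?_)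
        have hαI := hsub2 hα
        have hfb : f α ≤ C * ε⁻¹ * (Real.exp (c * a) * Real.exp (-c * α)) := by
          have := hdecay ε hε x hx α hαI
          rw [← Real.exp_add]
          have harg : -β * (α - a) / ε ^ ((2:ℝ)/3) = c * a + -c * α := by
            rw [hc]; field_simp; ring
          rw [← harg]
          exact this
        have h1 : α - a ≤ A - a := by linarith [hαI.2]
        have h2 : 0 ≤ α - a := by linarith [hαI.1]
        calc (α - a) * f α ≤ (A - a) * (C * ε⁻¹ * (Real.exp (c * a) * Real.exp (-c * α))) := by
              refine mul_le_mul h1 hfb (hf0 α hαI) (by linarith)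
          _ = K * Real.exp (-c * α) := by rw [hK]; ring
      have step2 : (∫ α in s2, K * Real.exp (-c * α)) ≤ ∫ α in Ioi s, K * Real.exp (-c * α) := by
        refine setIntegral_mono_set hintK ?_
          (HasSubset.Subset.eventuallyLE inter_subset_right)
        refine ae_restrict_of_forall_mem measurableSet_Ioi (fun α _ => ?_)
        positivity
      have step3 : (∫ α in Ioi s, K * Real.exp (-c * α)) = K * (Real.exp (-c * s) / c) := by
        rw [integral_const_mul, myIntExp s hcpos]
      have e2 : ε ^ (-(1:ℝ)/3) = ε⁻¹ * ε ^ ((2:ℝ)/3) := by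
        rw [← Real.rpow_neg_one ε, ← Real.rpow_add hε]; norm_num
      have e1 : Real.exp (c * a) * Real.exp (-c * s) = exp (-β * Real.sqrt ε * ε ^ (-(2:ℝ)/3)) := by
        rw [← Real.exp_add]
        congr 1
        rw [hs, hc]
        have : ε ^ (-(2:ℝ)/3) = (ε ^ ((2:ℝ)/3))⁻¹ := by
          rw [← Real.rpow_neg hε.le]; norm_num
        rw [this]
        field_simp
        ring
      have step4 : K * (Real.exp (-c * s) / c)
          = (C / β) * (A - a) * ε ^ (-(1:ℝ)/3) * exp (-β * Real.sqrt ε * ε ^ (-(2:ℝ)/3)) := by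
        rw [e2, ← e1, hK, hc]
        field_simp
      calc (∫ α in s2, (α - a) * f α) ≤ ∫ α in s2, K * Real.exp (-c * α) := step1
        _ ≤ ∫ α in Ioi s, K * Real.exp (-c * α) := step2
        _ = K * (Real.exp (-c * s) / c) := step3
        _ = _ := step4
    rw [hsplit]
    exact add_le_add hB1 hB2
  refine ⟨key, ?_⟩
  intro δ hδ
  have hsqrt : Tendsto (fun ε : ℝ => Real.sqrt ε * M) (𝓝[>] 0) (𝓝 0) := by
    have h : Tendsto Real.sqrt (𝓝 0) (𝓝 0) := by
      simpa using Real.continuous_sqrt.tendsto 0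
    simpa using (h.mono_left nhdsWithin_le_nhds).mul_const M
  have htend2 : Tendsto (fun ε : ℝ =>
      (C / β) * (A - a) * ε ^ (-(1:ℝ)/3) * exp (-β * Real.sqrt ε * ε ^ (-(2:ℝ)/3)))
      (𝓝[>] (0:ℝ)) (𝓝 0) := by
    have h1 : Tendsto (fun ε : ℝ => ε ^ (-(1:ℝ)/6)) (𝓝[>] (0:ℝ)) atTop := by
      have h2 : Tendsto (fun x : ℝ => x ^ ((1:ℝ)/6)) atTop atTop :=
        tendsto_rpow_atTop (by norm_num)
      refine (h2.comp tendsto_inv_nhdsGT_zero).congr' ?_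
      filter_upwards [self_mem_nhdsWithin] with ε (hε : ε ∈ Ioi 0)
      have hε' : (0:ℝ) < ε := hε
      simp only [Function.comp]
      rw [Real.inv_rpow hε'.le, ← Real.rpow_neg hε'.le]
      norm_num
    have h3 : Tendsto (fun t : ℝ =>
        (C / β) * (A - a) / β ^ 2 * ((β * t) ^ 2 * Real.exp (-(β * t)))) atTop (𝓝 0) := by
      have h4 := (Real.tendsto_pow_mul_exp_neg_atTop_nhds_zero 2).comp
        (tendsto_id.const_mul_atTop hβ)
      have h5 := h4.const_mul ((C / β) * (A - a) / β ^ 2)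
      simpa [Function.comp, mul_zero] using h5
    refine (h3.comp h1).congr' ?_
    filter_upwards [self_mem_nhdsWithin] with ε (hε : ε ∈ Ioi 0)
    have hε' : (0:ℝ) < ε := hε
    simp only [Function.comp]
    have ea : (ε ^ (-(1:ℝ)/6)) ^ (2:ℕ) = ε ^ (-(1:ℝ)/3) := by
      rw [← Real.rpow_natCast (ε ^ (-(1:ℝ)/6)) 2, ← Real.rpow_mul hε'.le]
      norm_num
    have eb : -β * Real.sqrt ε * ε ^ (-(2:ℝ)/3) = -(β * ε ^ (-(1:ℝ)/6)) := by
      rw [Real.sqrt_eq_rpow]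
      have : ε ^ ((1:ℝ)/2) * ε ^ (-(2:ℝ)/3) = ε ^ (-(1:ℝ)/6) := by
        rw [← Real.rpow_add hε']; norm_num
      calc -β * ε ^ ((1:ℝ)/2) * ε ^ (-(2:ℝ)/3)
          = -β * (ε ^ ((1:ℝ)/2) * ε ^ (-(2:ℝ)/3)) := by ring
        _ = -(β * ε ^ (-(1:ℝ)/6)) := by rw [this]; ring
    rw [mul_pow, ea, eb]
    field_simp
  have htot : Tendsto (fun ε : ℝ => Real.sqrt ε * M
      + (C / β) * (A - a) * ε ^ (-(1:ℝ)/3) * exp (-β * Real.sqrt ε * ε ^ (-(2:ℝ)/3)))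
      (𝓝[>] (0:ℝ)) (𝓝 0) := by
    simpa using hsqrt.add htend2
  have hev : ∀ᶠ ε in 𝓝[>] (0:ℝ), Real.sqrt ε * M
      + (C / β) * (A - a) * ε ^ (-(1:ℝ)/3) * exp (-β * Real.sqrt ε * ε ^ (-(2:ℝ)/3)) < δ :=
    htot.eventually_lt_const hδ
  obtain ⟨ε₀, hε₀, hsub⟩ := mem_nhdsGT_iff_exists_Ioo_subset.1 hev
  exact ⟨ε₀, hε₀, fun ε hεm x hx =>
    lt_of_le_of_lt (key ε hεm.1 x hx) (hsub hεm)⟩
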